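/- Let d ∈ ℕ, let ν be a Lévy measure on ℝ, let G ∈ L¹(ℝ^d), let 0 < r < R, and assume ∫_{|ρ|>1} |ρ| (∫_0^{1/|ρ|} d_{G_R}(α) λ¹(dα)) ν(dρ) < ∞, where G_R(x) := ∫_{B_R(x)} |G(y)| λ^d(dy). Let (φ_n) be a sequence of bounded measurable functions on ℝ^d with φ_n(y) = 0 for ‖y‖ ≥ r and ‖φ_n‖_∞ → 0 as n → ∞. Then ∫_{ℝ^d} ∫_ℝ min(1, (ρ·(φ_n*G)(x))²) ν(dρ) λ^d(dx) → 0 as n → ∞. -/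

import Mathlib

open MeasureTheory ENNReal Filter Topology

noncomputable section

/-- `ℝ^d` with the Euclidean structure. -/
abbrev Rd (d : ℕ) := EuclideanSpace ℝ (Fin d)

/-- The distribution function `d_f(α) = λ^d {x : |f x| > α}`. -/
def distFun {d : ℕ} (f : Rd d → ℝ) (α : ℝ) : ℝ≥0∞ := volume {x | α < |f x|}

/-- The convolution `(φ * G)(x) = ∫ G(y) φ(x - y) dy`. -/
def conv {d : ℕ} (φ G : Rd d → ℝ) (x : Rd d) : ℝ := ∫ y, G y * φ (x - y)

/-- `G_R(x) = ∫_{B_R(x)} |G(y)| dy`. -/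
def ballInt {d : ℕ} (G : Rd d → ℝ) (R : ℝ) (x : Rd d) : ℝ := ∫ y in Metric.ball x R, |G y|

private lemma aux_min_sq (s : ℝ≥0∞) : min 1 (s ^ 2) ≤ 2 * min 1 s := by
  rcases le_total s 1 with h | h
  · have h2 : s ^ 2 ≤ s := by
      calc s ^ 2 = s * s := sq s
        _ ≤ s * 1 := mul_le_mul_right h s
        _ = s := mul_one s
    rw [min_eq_right (h2.trans h), min_eq_right h]
    calc s ^ 2 ≤ s := h2
      _ ≤ 2 * s := by nth_rewrite 1 [← one_mul s]; exact mul_le_mul_left one_le_two s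
  · rw [min_eq_left h]
    calc min 1 (s ^ 2) ≤ 1 := min_le_left _ _
      _ ≤ 2 * 1 := by norm_num

private lemma aux_mul_min (c a b : ℝ≥0∞) : c * min a b = min (c * a) (c * b) := by
  have hm : Monotone (fun x : ℝ≥0∞ => c * x) := fun x y h => mul_le_mul_right h c
  exact hm.map_min

lemma Real.ennnorm_eq_ofReal_abs (x : ℝ) : (‖x‖₊ : ℝ≥0∞) = ENNReal.ofReal |x| := by
  rw [← Real.enorm_eq_ofReal_abs]; rfl

/-- under the integrability condition (ass2) on the Lévy measure `ν`,
`∫∫ min(1, (ρ·(φ_n*G)(x))²) ν(dρ) dx → 0` when `‖φ_n‖_∞ → 0`. -/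
theorem statement3 {d : ℕ} (hd : 0 < d) (ν : Measure ℝ)
    (hν0 : ν {0} = 0)
    (hνlevy : ∫⁻ ρ, ENNReal.ofReal (min 1 (ρ ^ 2)) ∂ν < ⊤)
    (G : Rd d → ℝ) (hG : MeasureTheory.Integrable G volume)
    (r R : ℝ) (hr : 0 < r) (hrR : r < R)
    (hass2 : ∫⁻ ρ in {ρ : ℝ | 1 < |ρ|},
        (ENNReal.ofReal |ρ| * ∫⁻ α in Set.Ioc (0 : ℝ) (1 / |ρ|),
          distFun (ballInt G R) α) ∂ν < ⊤)
    (φ : ℕ → Rd d → ℝ)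
    (hφm : ∀ n, Measurable (φ n))
    (hφb : ∀ n, BddAbove (Set.range fun y => |φ n y|))
    (hφs : ∀ n, ∀ y : Rd d, r ≤ ‖y‖ → φ n y = 0)
    (hφ0 : Tendsto (fun n => ⨆ y, |φ n y|) atTop (𝓝 (0 : ℝ))) :
    Tendsto (fun n => ∫⁻ x, ∫⁻ ρ,
        min 1 (ENNReal.ofReal ((ρ * conv (φ n) G x) ^ 2)) ∂ν)
      atTop (𝓝 (0 : ℝ≥0∞)) := by
  classical
  -- ν is sigma-finite
  have hfinset : ∀ c : ℝ, 0 < c → ν {ρ : ℝ | c < |ρ|} < ∞ := by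
    intro c hc
    have hk0 : (0 : ℝ≥0∞) < ENNReal.ofReal (min 1 (c ^ 2)) :=
      ENNReal.ofReal_pos.2 (lt_min one_pos (by positivity))
    have hle : ENNReal.ofReal (min 1 (c ^ 2)) * ν {ρ : ℝ | c < |ρ|}
        ≤ ∫⁻ ρ, ENNReal.ofReal (min 1 (ρ ^ 2)) ∂ν := by
      calc ENNReal.ofReal (min 1 (c ^ 2)) * ν {ρ : ℝ | c < |ρ|}
          = ∫⁻ _ in {ρ : ℝ | c < |ρ|}, ENNReal.ofReal (min 1 (c ^ 2)) ∂ν :=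
            (setLIntegral_const _ _).symm
        _ ≤ ∫⁻ ρ in {ρ : ℝ | c < |ρ|}, ENNReal.ofReal (min 1 (ρ ^ 2)) ∂ν := by
            refine setLIntegral_mono ((measurable_const.min
              (measurable_id.pow_const 2)).ennreal_ofReal) fun ρ hρ => ?_
            refine ENNReal.ofReal_le_ofReal (min_le_min le_rfl ?_)
            calc c ^ 2 ≤ |ρ| ^ 2 := pow_le_pow_left₀ hc.le (le_of_lt hρ) 2
              _ = ρ ^ 2 := sq_abs ρ
        _ ≤ _ := setLIntegral_le_lintegral _ _
    by_contra hcon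
    rw [not_lt, top_le_iff] at hcon
    rw [hcon, ENNReal.mul_top hk0.ne'] at hle
    exact hνlevy.not_ge hle
  haveI : SigmaFinite ν := by
    refine Measure.sigmaFinite_of_countable
      (Set.countable_range fun n : ℕ => {ρ : ℝ | ((n : ℝ) + 1)⁻¹ < |ρ|} ∪ {0}) ?_ ?_
    · rintro s ⟨n, rfl⟩
      refine (measure_union_le _ _).trans_lt ?_
      rw [hν0, add_zero]
      exact hfinset _ (by positivity)
    · apply Set.eq_univ_of_forall
      intro ρ
      rcases eq_or_ne ρ 0 with h | h
      · exact ⟨_, ⟨0, rfl⟩, Or.inr (by simp [h])⟩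
      · obtain ⟨n, hn⟩ := exists_nat_gt (|ρ|)⁻¹
        refine ⟨_, ⟨n, rfl⟩, Or.inl ?_⟩
        show ((n : ℝ) + 1)⁻¹ < |ρ|
        have habs : 0 < |ρ| := abs_pos.2 h
        have h2 : (|ρ|)⁻¹ < (n : ℝ) + 1 := hn.trans (lt_add_one _)
        calc ((n : ℝ) + 1)⁻¹ < ((|ρ|)⁻¹)⁻¹ := by
              exact inv_strictAnti₀ (by positivity) h2
          _ = |ρ| := inv_inv _
  set ε : ℕ → ℝ := fun n => ⨆ y, |φ n y| with hεdef
  -- measurable version of `‖G ·‖₊`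
  have hGae : AEMeasurable (fun y : Rd d => (‖G y‖₊ : ℝ≥0∞)) volume :=
    hG.aestronglyMeasurable.enorm
  set N : Rd d → ℝ≥0∞ := hGae.mk _ with hNdef
  have hNmeas : Measurable N := hGae.measurable_mk
  have hNae : (fun y : Rd d => (‖G y‖₊ : ℝ≥0∞)) =ᵐ[volume] N := hGae.ae_eq_mk
  set g : Rd d → ℝ≥0∞ := fun x => ∫⁻ y in Metric.ball x R, N y with hgdef
  -- measurability of g
  have hKmeas : Measurable (fun p : Rd d × Rd d => (Metric.ball p.1 R).indicator N p.2) := by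
    have heq : (fun p : Rd d × Rd d => (Metric.ball p.1 R).indicator N p.2)
        = fun p : Rd d × Rd d =>
          Set.indicator {q : Rd d × Rd d | dist q.2 q.1 < R} (fun q => N q.2) p := by
      funext p
      simp [Set.indicator_apply, Metric.mem_ball]
    rw [heq]
    have hopen : MeasurableSet {q : Rd d × Rd d | dist q.2 q.1 < R} :=
      (isOpen_lt (continuous_dist.comp (continuous_snd.prodMk continuous_fst))
        continuous_const).measurableSet
    exact (hNmeas.comp measurable_snd).indicator hopen
  have hgmeas : Measurable g := by
    have heq : g = fun x => ∫⁻ y, (Metric.ball x R).indicator N y := by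
      funext x
      rw [lintegral_indicator measurableSet_ball]
    rw [heq]
    exact hKmeas.lintegral_prod_right'
  -- finiteness facts
  have hC : ∫⁻ y, N y ∂volume < ∞ := by
    rw [← lintegral_congr_ae hNae]
    exact hG.2
  have hgle : ∀ x, g x ≤ ∫⁻ y, N y := fun x => setLIntegral_le_lintegral _ _
  have hgtop : ∀ x, g x ≠ ∞ := fun x => ((hgle x).trans_lt hC).ne
  -- relation to `ballInt`
  have hballnn : ∀ x, 0 ≤ ballInt G R x := fun x => integral_nonneg fun y => abs_nonneg _
  have hball : ∀ x, ENNReal.ofReal (ballInt G R x) = g x := by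
    intro x
    rw [hgdef]
    simp only
    rw [← lintegral_congr_ae (ae_restrict_of_ae hNae)]
    rw [show ballInt G R x = ∫ y in Metric.ball x R, |G y| from rfl,
      MeasureTheory.ofReal_integral_eq_lintegral_ofReal hG.abs.integrableOn
        (Eventually.of_forall fun y => abs_nonneg _)]
    exact lintegral_congr fun y => (Real.ennnorm_eq_ofReal_abs _).symm
  -- finiteness of ∫ g
  have hgint : ∫⁻ x, g x ∂volume ≠ ∞ := by
    have hswap : ∫⁻ x, g x ∂volume
        = ∫⁻ y, ∫⁻ x, (Metric.ball x R).indicator N y ∂volume ∂volume := by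
      have : ∫⁻ x, g x ∂volume
          = ∫⁻ x, ∫⁻ y, (Metric.ball x R).indicator N y ∂volume ∂volume := by
        refine lintegral_congr fun x => ?_
        rw [lintegral_indicator measurableSet_ball]
      rw [this]
      exact lintegral_lintegral_swap hKmeas.aemeasurable
    have hinner : ∀ y, ∫⁻ x, (Metric.ball x R).indicator N y ∂volume
        = N y * volume (Metric.ball (0 : Rd d) R) := by
      intro y
      have : (fun x => (Metric.ball x R).indicator N y)
          = fun x => (Metric.ball y R).indicator (fun _ => N y) x := by
        funext x
        simp only [Set.indicator_apply, Metric.mem_ball, dist_comm y x]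
      rw [this, lintegral_indicator measurableSet_ball, setLIntegral_const,
        Measure.addHaar_ball_center volume y R]
    rw [hswap]
    calc ∫⁻ y, ∫⁻ x, (Metric.ball x R).indicator N y ∂volume ∂volume
        = ∫⁻ y, N y * volume (Metric.ball (0 : Rd d) R) ∂volume :=
          lintegral_congr hinner
      _ = (∫⁻ y, N y ∂volume) * volume (Metric.ball (0 : Rd d) R) :=
          lintegral_mul_const' _ _ measure_ball_lt_top.ne
      _ ≠ ∞ := ENNReal.mul_ne_top hC.ne measure_ball_lt_top.ne
  set S : ℝ≥0∞ := ∫⁻ x, (g x) ^ 2 ∂volume with hSdef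
  have hSfin : S ≠ ∞ := by
    have : S ≤ (∫⁻ y, N y ∂volume) * ∫⁻ x, g x ∂volume := by
      rw [hSdef]
      calc ∫⁻ x, (g x) ^ 2 ∂volume ≤ ∫⁻ x, (∫⁻ y, N y ∂volume) * g x ∂volume := by
            refine lintegral_mono fun x => ?_
            rw [sq]
            exact mul_le_mul_left (hgle x) _
        _ = (∫⁻ y, N y ∂volume) * ∫⁻ x, g x ∂volume := lintegral_const_mul' _ _ hC.ne
    exact (this.trans_lt (ENNReal.mul_lt_top hC hgint.lt_top)).ne
  -- key convolution bound
  have hcv : ∀ n x, (‖conv (φ n) G x‖₊ : ℝ≥0∞) ≤ ENNReal.ofReal (ε n) * g x := by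
    intro n x
    calc (‖conv (φ n) G x‖₊ : ℝ≥0∞)
        ≤ ∫⁻ y, ‖G y * φ n (x - y)‖₊ ∂volume :=
          enorm_integral_le_lintegral_enorm _
      _ ≤ ∫⁻ y, ENNReal.ofReal (ε n) *
            (Metric.ball x r).indicator (fun y => (‖G y‖₊ : ℝ≥0∞)) y ∂volume := by
          refine lintegral_mono fun y => ?_
          by_cases hy : y ∈ Metric.ball x r
          · rw [Set.indicator_of_mem hy]
            rw [nnnorm_mul, ENNReal.coe_mul, mul_comm]
            refine mul_le_mul_left ?_ _
            rw [Real.ennnorm_eq_ofReal_abs]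
            exact ENNReal.ofReal_le_ofReal (le_ciSup (hφb n) (x - y))
          · have : φ n (x - y) = 0 := by
              refine hφs n (x - y) ?_
              have : r ≤ dist y x := by
                simpa [Metric.mem_ball] using hy
              rwa [show ‖x - y‖ = dist y x from by
                rw [dist_comm, dist_eq_norm]]
            simp [this]
      _ = ENNReal.ofReal (ε n) *
            ∫⁻ y in Metric.ball x r, (‖G y‖₊ : ℝ≥0∞) ∂volume := by
          rw [lintegral_const_mul' _ _ ENNReal.ofReal_ne_top,
            lintegral_indicator measurableSet_ball]
      _ ≤ ENNReal.ofReal (ε n) *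
            ∫⁻ y in Metric.ball x R, (‖G y‖₊ : ℝ≥0∞) ∂volume := by
          refine mul_le_mul_right ?_ _
          exact lintegral_mono_set (Metric.ball_subset_ball hrR.le)
      _ = ENNReal.ofReal (ε n) * g x := by
          rw [lintegral_congr_ae (ae_restrict_of_ae hNae)]
  -- pointwise bound of the main integrand
  have hpt : ∀ n x ρ, min 1 (ENNReal.ofReal ((ρ * conv (φ n) G x) ^ 2))
      ≤ min 1 (ENNReal.ofReal |ρ| ^ 2 * (ENNReal.ofReal (ε n)) ^ 2 * (g x) ^ 2) := by
    intro n x ρ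
    refine min_le_min le_rfl ?_
    have h1 : ENNReal.ofReal ((ρ * conv (φ n) G x) ^ 2)
        = (ENNReal.ofReal |ρ| * (‖conv (φ n) G x‖₊ : ℝ≥0∞)) ^ 2 := by
      rw [← Real.ennnorm_eq_ofReal_abs, ← ENNReal.coe_mul, ← nnnorm_mul,
        Real.ennnorm_eq_ofReal_abs, ← ENNReal.ofReal_pow (abs_nonneg _), sq_abs]
    rw [h1]
    calc (ENNReal.ofReal |ρ| * (‖conv (φ n) G x‖₊ : ℝ≥0∞)) ^ 2
        ≤ (ENNReal.ofReal |ρ| * (ENNReal.ofReal (ε n) * g x)) ^ 2 := by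
          exact pow_le_pow_left' (mul_le_mul_right (hcv n x) _) 2
      _ = ENNReal.ofReal |ρ| ^ 2 * (ENNReal.ofReal (ε n)) ^ 2 * (g x) ^ 2 := by
          rw [mul_pow, mul_pow, mul_assoc]
  -- the majorant
  set Q : ℝ≥0∞ → ℝ → ℝ≥0∞ :=
    fun c ρ => ∫⁻ x, min 1 (ENNReal.ofReal |ρ| ^ 2 * c ^ 2 * (g x) ^ 2) ∂volume with hQdef
  have hQmeas : ∀ c, Measurable (Q c) := by
    intro c
    exact Measurable.lintegral_prod_right'
      (f := fun p : ℝ × Rd d => min 1 (ENNReal.ofReal |p.1| ^ 2 * c ^ 2 * (g p.2) ^ 2))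
      (measurable_const.min
        ((((measurable_fst.abs.ennreal_ofReal.pow_const 2).mul_const (c ^ 2)).mul
          ((hgmeas.comp measurable_snd).pow_const 2))))
  have hQle : ∀ c ρ, Q c ρ ≤ ENNReal.ofReal |ρ| ^ 2 * c ^ 2 * S := by
    intro c ρ
    rw [hQdef]
    calc ∫⁻ x, min 1 (ENNReal.ofReal |ρ| ^ 2 * c ^ 2 * (g x) ^ 2) ∂volume
        ≤ ∫⁻ x, ENNReal.ofReal |ρ| ^ 2 * c ^ 2 * (g x) ^ 2 ∂volume :=
          lintegral_mono fun x => min_le_right _ _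
      _ = ENNReal.ofReal |ρ| ^ 2 * c ^ 2 * S := by
          rw [hSdef]
          exact lintegral_const_mul'' _ ((hgmeas.pow_const 2).aemeasurable)
  -- step A : bound the full double integral
  have hstepA : ∀ n, (∫⁻ x, ∫⁻ ρ,
      min 1 (ENNReal.ofReal ((ρ * conv (φ n) G x) ^ 2)) ∂ν ∂volume)
      ≤ ∫⁻ ρ, Q (ENNReal.ofReal (ε n)) ρ ∂ν := by
    intro n
    calc ∫⁻ x, ∫⁻ ρ, min 1 (ENNReal.ofReal ((ρ * conv (φ n) G x) ^ 2)) ∂ν ∂volume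
        ≤ ∫⁻ x, ∫⁻ ρ, min 1 (ENNReal.ofReal |ρ| ^ 2 *
            (ENNReal.ofReal (ε n)) ^ 2 * (g x) ^ 2) ∂ν ∂volume :=
          lintegral_mono fun x => lintegral_mono fun ρ => hpt n x ρ
      _ = ∫⁻ ρ, Q (ENNReal.ofReal (ε n)) ρ ∂ν := by
          exact lintegral_lintegral_swap
            (Measurable.aemeasurable (measurable_const.min
              ((((measurable_snd.abs.ennreal_ofReal.pow_const 2).mul_const _).mul
                ((hgmeas.comp measurable_fst).pow_const 2)))))
  -- the truncated sup sequence
  set e : ℕ → ℝ≥0∞ := fun n => min (ENNReal.ofReal (ε n)) 1 with hedef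
  have he1 : ∀ n, e n ≤ 1 := fun n => min_le_right _ _
  have heps : Tendsto (fun n => ENNReal.ofReal (ε n)) atTop (𝓝 0) := by
    simpa using ENNReal.tendsto_ofReal hφ0
  have he0 : Tendsto e atTop (𝓝 0) := by
    have := heps.min (tendsto_const_nhds (x := (1 : ℝ≥0∞)))
    simpa using this
  -- the key estimate for large |ρ|
  have hkey : ∀ ρ : ℝ, 1 < |ρ| → Q 1 ρ ≤ 2 * (ENNReal.ofReal |ρ| *
      ∫⁻ α in Set.Ioc (0 : ℝ) (1 / |ρ|), distFun (ballInt G R) α) := by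
    intro ρ hρ
    have hρ0 : (0 : ℝ) < |ρ| := lt_trans one_pos hρ
    set c : ℝ≥0∞ := ENNReal.ofReal |ρ| with hcdef
    set b : ℝ := 1 / |ρ| with hbdef
    have hb0 : 0 < b := by positivity
    have hcb : c * ENNReal.ofReal b = 1 := by
      rw [hcdef, hbdef, ← ENNReal.ofReal_mul (abs_nonneg ρ), mul_one_div_cancel hρ0.ne']
      simp
    -- elementary layer bound
    have hmin : ∀ x, min (ENNReal.ofReal b) (g x)
        ≤ volume ({α : ℝ | ENNReal.ofReal α < g x} ∩ Set.Ioc 0 b) := by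
      intro x
      set t' : ℝ := (g x).toReal with ht'def
      have hsub : Set.Ioo 0 (min t' b) ⊆ {α : ℝ | ENNReal.ofReal α < g x} ∩ Set.Ioc 0 b := by
        intro α hα
        obtain ⟨h0, hlt⟩ := hα
        refine ⟨?_, h0, (hlt.trans_le (min_le_right _ _)).le⟩
        exact (ENNReal.ofReal_lt_iff_lt_toReal h0.le (hgtop x)).2
          (hlt.trans_le (min_le_left _ _))
      calc min (ENNReal.ofReal b) (g x)
          = min (ENNReal.ofReal b) (ENNReal.ofReal t') := by
            rw [ht'def, ENNReal.ofReal_toReal (hgtop x)]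
        _ = ENNReal.ofReal (min t' b) := by
            rw [min_comm]
            have hmono : Monotone ENNReal.ofReal := fun _ _ h => ENNReal.ofReal_le_ofReal h
            exact (hmono.map_min).symm
        _ = volume (Set.Ioo 0 (min t' b)) := by rw [Real.volume_Ioo, sub_zero]
        _ ≤ _ := measure_mono hsub
    have hTmeas : MeasurableSet {p : Rd d × ℝ | ENNReal.ofReal p.2 < g p.1} :=
      measurableSet_lt (measurable_snd.ennreal_ofReal) (hgmeas.comp measurable_fst)
    have hlayer : ∫⁻ x, min (ENNReal.ofReal b) (g x) ∂volume
        ≤ ∫⁻ α in Set.Ioc (0 : ℝ) b, distFun (ballInt G R) α := by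
      calc ∫⁻ x, min (ENNReal.ofReal b) (g x) ∂volume
          ≤ ∫⁻ x, ∫⁻ α in Set.Ioc (0 : ℝ) b,
              Set.indicator {p : Rd d × ℝ | ENNReal.ofReal p.2 < g p.1} 1 (x, α) ∂volume ∂volume := by
            refine lintegral_mono fun x => ?_
            refine (hmin x).trans ?_
            have hmeasα : MeasurableSet {α : ℝ | ENNReal.ofReal α < g x} :=
              measurableSet_lt (measurable_id.ennreal_ofReal) measurable_const
            have : ∫⁻ α in Set.Ioc (0 : ℝ) b,
                Set.indicator {p : Rd d × ℝ | ENNReal.ofReal p.2 < g p.1} 1 (x, α) ∂volume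
                = volume ({α : ℝ | ENNReal.ofReal α < g x} ∩ Set.Ioc 0 b) := by
              trans (∫⁻ α in Set.Ioc (0 : ℝ) b,
                  Set.indicator {α : ℝ | ENNReal.ofReal α < g x} 1 α ∂volume)
              · exact lintegral_congr fun α => by simp [Set.indicator_apply]
              · rw [lintegral_indicator_one hmeasα, Measure.restrict_apply hmeasα]
            rw [this]
        _ = ∫⁻ α in Set.Ioc (0 : ℝ) b, ∫⁻ x,
              Set.indicator {p : Rd d × ℝ | ENNReal.ofReal p.2 < g p.1} 1 (x, α)
                ∂volume ∂volume := by
            exact lintegral_lintegral_swap ((measurable_one.indicator hTmeas).aemeasurable)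
        _ = ∫⁻ α in Set.Ioc (0 : ℝ) b, distFun (ballInt G R) α := by
            refine setLIntegral_congr_fun measurableSet_Ioc ?_
            intro α hα
            trans (∫⁻ x, Set.indicator {x : Rd d | ENNReal.ofReal α < g x} 1 x ∂volume)
            · exact lintegral_congr fun x => by simp [Set.indicator_apply]
            rw [lintegral_indicator_one (measurableSet_lt measurable_const hgmeas)]
            rw [distFun]
            congr 1
            ext x
            simp only [Set.mem_setOf_eq]
            rw [abs_of_nonneg (hballnn x), ← hball x]
            exact ENNReal.ofReal_lt_ofReal_iff_of_nonneg hα.1.le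

    calc Q 1 ρ = ∫⁻ x, min 1 ((c * g x) ^ 2) ∂volume := by
          rw [hQdef]
          exact lintegral_congr fun x => by rw [one_pow, mul_one, mul_pow]
      _ ≤ ∫⁻ x, 2 * min 1 (c * g x) ∂volume := lintegral_mono fun x => aux_min_sq _
      _ = 2 * ∫⁻ x, min 1 (c * g x) ∂volume := lintegral_const_mul' _ _ (by norm_num)
      _ = 2 * ∫⁻ x, c * min (ENNReal.ofReal b) (g x) ∂volume := by
          congr 1
          exact lintegral_congr fun x => by rw [aux_mul_min, hcb]
      _ = 2 * (c * ∫⁻ x, min (ENNReal.ofReal b) (g x) ∂volume) := by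
          rw [lintegral_const_mul' _ _ ENNReal.ofReal_ne_top]
      _ ≤ 2 * (c * ∫⁻ α in Set.Ioc (0 : ℝ) b, distFun (ballInt G R) α) := by
          exact mul_le_mul_right (mul_le_mul_right hlayer _) _
  -- finiteness of the dominating integral
  have hsmeas : MeasurableSet {ρ : ℝ | 1 < |ρ|} :=
    measurableSet_lt measurable_const measurable_abs
  have hfin : ∫⁻ ρ, Q 1 ρ ∂ν ≠ ∞ := by
    rw [← lintegral_add_compl (Q 1) hsmeas]
    refine ENNReal.add_ne_top.2 ⟨?_, ?_⟩
    · -- large ρ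
      have hb : ∫⁻ ρ in {ρ : ℝ | 1 < |ρ|}, Q 1 ρ ∂ν
          ≤ ∫⁻ ρ in {ρ : ℝ | 1 < |ρ|}, 2 * (ENNReal.ofReal |ρ| *
            ∫⁻ α in Set.Ioc (0 : ℝ) (1 / |ρ|), distFun (ballInt G R) α) ∂ν := by
        refine setLIntegral_mono ?_ fun ρ hρ => hkey ρ hρ
        -- measurability of the bound
        have hdmono : Monotone (fun b : ℝ =>
            ∫⁻ α in Set.Ioc (0 : ℝ) b, distFun (ballInt G R) α) :=
          fun b₁ b₂ h => lintegral_mono_set (Set.Ioc_subset_Ioc le_rfl h)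
        have : Measurable (fun b : ℝ =>
            ∫⁻ α in Set.Ioc (0 : ℝ) b, distFun (ballInt G R) α) := hdmono.measurable
        exact measurable_const.mul
          ((measurable_abs.ennreal_ofReal).mul
            (this.comp (measurable_const.div measurable_abs)))
      refine (hb.trans_lt ?_).ne
      rw [lintegral_const_mul' _ _ (by norm_num : (2 : ℝ≥0∞) ≠ ∞)]
      exact ENNReal.mul_lt_top (by norm_num) hass2
    · -- small ρ
      have hb : ∫⁻ ρ in {ρ : ℝ | 1 < |ρ|}ᶜ, Q 1 ρ ∂ν
          ≤ ∫⁻ ρ in {ρ : ℝ | 1 < |ρ|}ᶜ, ENNReal.ofReal (min 1 (ρ ^ 2)) * S ∂ν := by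
        refine setLIntegral_mono ((measurable_const.min
          (measurable_id.pow_const 2)).ennreal_ofReal.mul_const S) fun ρ hρ => ?_
        have hρle : |ρ| ≤ 1 := not_lt.1 hρ
        have h1 : ρ ^ 2 ≤ 1 := by
          rw [← sq_abs]
          exact pow_le_one₀ (abs_nonneg ρ) hρle
        calc Q 1 ρ ≤ ENNReal.ofReal |ρ| ^ 2 * 1 ^ 2 * S := hQle 1 ρ
          _ = ENNReal.ofReal (min 1 (ρ ^ 2)) * S := by
            rw [one_pow, mul_one, ← ENNReal.ofReal_pow (abs_nonneg ρ), sq_abs,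
              min_eq_right h1]
      refine (hb.trans_lt ?_).ne
      calc ∫⁻ ρ in {ρ : ℝ | 1 < |ρ|}ᶜ, ENNReal.ofReal (min 1 (ρ ^ 2)) * S ∂ν
          = (∫⁻ ρ in {ρ : ℝ | 1 < |ρ|}ᶜ, ENNReal.ofReal (min 1 (ρ ^ 2)) ∂ν) * S :=
            lintegral_mul_const' _ _ hSfin
        _ ≤ (∫⁻ ρ, ENNReal.ofReal (min 1 (ρ ^ 2)) ∂ν) * S :=
            mul_le_mul_left (setLIntegral_le_lintegral _ _) _
        _ < ∞ := ENNReal.mul_lt_top hνlevy hSfin.lt_top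
  -- pointwise convergence of the ρ-integrands
  have hlim : ∀ ρ : ℝ, Tendsto (fun n => Q (e n) ρ) atTop (𝓝 0) := by
    intro ρ
    have hconst : ENNReal.ofReal |ρ| ^ 2 * S ≠ ∞ :=
      ENNReal.mul_ne_top (ENNReal.pow_ne_top ENNReal.ofReal_ne_top) hSfin
    have h2 : Tendsto (fun n => (ENNReal.ofReal |ρ| ^ 2 * S) * (e n) ^ 2) atTop (𝓝 0) := by
      have hp : Tendsto (fun n => (e n) ^ 2) atTop (𝓝 0) := by
        simpa using ENNReal.Tendsto.pow (n := 2) he0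
      simpa using ENNReal.Tendsto.const_mul hp (Or.inr hconst)
    refine tendsto_of_tendsto_of_tendsto_of_le_of_le tendsto_const_nhds h2
      (fun n => zero_le) fun n => ?_
    calc Q (e n) ρ ≤ ENNReal.ofReal |ρ| ^ 2 * (e n) ^ 2 * S := hQle _ ρ
      _ = (ENNReal.ofReal |ρ| ^ 2 * S) * (e n) ^ 2 := by ring
  -- DCT over ν
  have htend : Tendsto (fun n => ∫⁻ ρ, Q (e n) ρ ∂ν) atTop (𝓝 0) := by
    have h0 : (0 : ℝ≥0∞) = ∫⁻ ρ, (0 : ℝ≥0∞) ∂ν := by simp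
    rw [h0]
    refine tendsto_lintegral_of_dominated_convergence (Q 1)
      (fun n => hQmeas (e n)) (fun n => Eventually.of_forall fun ρ => ?_) hfin
      (Eventually.of_forall fun ρ => hlim ρ)
    rw [hQdef]
    refine lintegral_mono fun x => min_le_min le_rfl ?_
    refine mul_le_mul_left (mul_le_mul_right ?_ _) _
    exact pow_le_pow_left' (he1 n) 2
  -- conclusion by squeezing
  refine tendsto_of_tendsto_of_tendsto_of_le_of_le' tendsto_const_nhds htend
    (Eventually.of_forall fun n => zero_le) ?_
  have hev : ∀ᶠ n in atTop, ENNReal.ofReal (ε n) ≤ 1 :=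
    heps.eventually_le_const (by norm_num)
  filter_upwards [hev] with n hn
  calc ∫⁻ x, ∫⁻ ρ, min 1 (ENNReal.ofReal ((ρ * conv (φ n) G x) ^ 2)) ∂ν ∂volume
      ≤ ∫⁻ ρ, Q (ENNReal.ofReal (ε n)) ρ ∂ν := hstepA n
    _ = ∫⁻ ρ, Q (e n) ρ ∂ν := by rw [hedef]; simp only [min_eq_left hn]
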